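/- For q ∈ ℂ with |q| < 1, an odd positive integer d, a natural number k ≥ 1, a natural number x, and n ∈ ℕ: (2^k/(1−q)^n) ∑_{a_1,…,a_k=0}^{d−1} (∏_{i=1}^k χ(a_i)) (−1)^{a_1+⋯+a_k} ∑_{l=0}^n C(n,l)(−1)^l q^{l(x + a_1+⋯+a_k)} / (1+q^{dl})^k = 2^k ∑_{a_1,…,a_k=0}^{d−1} (∏_{i=1}^k χ(a_i)) (−1)^{a_1+⋯+a_k} ∑_{m=0}^∞ C(m+k−1, m) (−1)^m [x + a_1+⋯+a_k + dm]_q^n, where χ : ℕ → ℂ is any d-periodic function. -/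

import Mathlib

open Filter Finset

/-- Abel summation: `HasAbelSum a S` means `∑ a(m) r^m → S` as `r → 1⁻`. -/
def HasAbelSum (a : ℕ → ℂ) (S : ℂ) : Prop :=
  Tendsto (fun r : ℝ => ∑' m : ℕ, a m * (r : ℂ) ^ m) (nhdsWithin 1 (Set.Iio 1)) (nhds S)

/-- Theorem 1: the two expressions for `E_{n,χ,q}^{(k)}(x)` agree, the infinite series over `m`
(with negative-binomial coefficients `C(m+k−1,m)`) being understood in the Abel sense:
`(2^k/(1−q)^n) ∑_{a⃗∈[0,d)^k} (∏χ(aᵢ))(−1)^{Σa} ∑_{l≤n} C(n,l)(−1)^l q^{l(x+Σa)}/(1+q^{dl})^k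
 = 2^k ∑_{a⃗} (∏χ(aᵢ))(−1)^{Σa} ∑_{m≥0} C(m+k−1,m)(−1)^m [x+Σa+dm]_q^n`. -/
theorem higher_order_q_euler_two_forms (q : ℂ) (hq : ‖q‖ < 1)
    (d : ℕ) (hd : Odd d) (hd0 : 0 < d) (k : ℕ) (hk : 1 ≤ k)
    (χ : ℕ → ℂ) (hχ : ∀ m, χ (m + d) = χ m) (x n : ℕ) :
    HasAbelSum
      (fun m => 2 ^ k * ∑ a : Fin k → Fin d,
        (∏ i, χ (a i)) * (-1 : ℂ) ^ (∑ j, (a j : ℕ)) *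
          ((m + k - 1).choose m : ℂ) * (-1 : ℂ) ^ m *
            ((1 - q ^ (x + (∑ j, (a j : ℕ)) + d * m)) / (1 - q)) ^ n)
      ((2 ^ k / (1 - q) ^ n) * ∑ a : Fin k → Fin d,
        (∏ i, χ (a i)) * (-1 : ℂ) ^ (∑ j, (a j : ℕ)) *
          ∑ l ∈ Finset.range (n + 1),
            (n.choose l : ℂ) * (-1 : ℂ) ^ l * q ^ (l * (x + ∑ j, (a j : ℕ))) /
              (1 + q ^ (d * l)) ^ k) := by
  have hne : ∀ l : ℕ, (1 : ℂ) + q ^ (d * l) ≠ 0 := by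
    intro l h
    rcases Nat.eq_zero_or_pos (d * l) with h0 | h0
    · rw [h0] at h; norm_num at h
    · have h1 : q ^ (d * l) = -1 := by linear_combination h
      have h2 : ‖q ^ (d * l)‖ = 1 := by rw [h1]; simp
      rw [norm_pow] at h2
      have h3 : ‖q‖ ^ (d * l) < 1 :=
        pow_lt_one₀ (norm_nonneg q) hq h0.ne'
      rw [h2] at h3
      exact lt_irrefl _ h3
  have key : ∀ r : ℝ, r ∈ Set.Ioo (0:ℝ) 1 →
      HasSum (fun m : ℕ =>
        (2 ^ k * ∑ a : Fin k → Fin d,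
          (∏ i, χ (a i)) * (-1 : ℂ) ^ (∑ j, (a j : ℕ)) *
            ((m + k - 1).choose m : ℂ) * (-1 : ℂ) ^ m *
              ((1 - q ^ (x + (∑ j, (a j : ℕ)) + d * m)) / (1 - q)) ^ n) * (r : ℂ) ^ m)
        ((2 ^ k / (1 - q) ^ n) * ∑ a : Fin k → Fin d,
          (∏ i, χ (a i)) * (-1 : ℂ) ^ (∑ j, (a j : ℕ)) *
            ∑ l ∈ Finset.range (n + 1),
              (n.choose l : ℂ) * (-1 : ℂ) ^ l * q ^ (l * (x + ∑ j, (a j : ℕ))) /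
                (1 + q ^ (d * l) * (r : ℂ)) ^ k) := by
    rintro r ⟨hr0, hr1⟩
    have ha : ∀ a : Fin k → Fin d,
        HasSum (fun m : ℕ =>
          (∏ i, χ (a i)) * (-1 : ℂ) ^ (∑ j, (a j : ℕ)) *
            ((m + k - 1).choose m : ℂ) * (-1 : ℂ) ^ m *
              ((1 - q ^ (x + (∑ j, (a j : ℕ)) + d * m)) / (1 - q)) ^ n * (r : ℂ) ^ m)
          ((1 / (1 - q) ^ n) * ((∏ i, χ (a i)) * (-1 : ℂ) ^ (∑ j, (a j : ℕ)) *
            ∑ l ∈ Finset.range (n + 1),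
              (n.choose l : ℂ) * (-1 : ℂ) ^ l * q ^ (l * (x + ∑ j, (a j : ℕ))) /
                (1 + q ^ (d * l) * (r : ℂ)) ^ k)) := by
      intro a
      set z := x + ∑ j, (a j : ℕ) with hz
      set c := (∏ i, χ (a i)) * (-1 : ℂ) ^ (∑ j, (a j : ℕ)) with hc
      have hl : ∀ l : ℕ, HasSum
          (fun m : ℕ => (c * ((n.choose l : ℂ) * (-1) ^ l * q ^ (l * z) / (1 - q) ^ n)) *
            (((m + (k - 1)).choose (k - 1) : ℂ) * (-(q ^ (d * l) * (r : ℂ))) ^ m))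
          ((c * ((n.choose l : ℂ) * (-1) ^ l * q ^ (l * z) / (1 - q) ^ n)) *
            (1 / (1 - (-(q ^ (d * l) * (r : ℂ)))) ^ ((k - 1) + 1))) := by
        intro l
        refine HasSum.mul_left _ (hasSum_choose_mul_geometric_of_norm_lt_one (k - 1) ?_)
        have hnorm : ‖q ^ (d * l) * (r : ℂ)‖ = ‖q‖ ^ (d * l) * r := by
          rw [norm_mul, norm_pow, Complex.norm_real,
            Real.norm_eq_abs, abs_of_pos hr0]
        rw [norm_neg, hnorm]
        calc ‖q‖ ^ (d * l) * r ≤ 1 * r := by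
              apply mul_le_mul_of_nonneg_right _ hr0.le
              exact pow_le_one₀ (norm_nonneg q) hq.le
          _ < 1 := by simpa using hr1
      have hsum := hasSum_sum (f := fun l (m : ℕ) =>
          (c * ((n.choose l : ℂ) * (-1) ^ l * q ^ (l * z) / (1 - q) ^ n)) *
            (((m + (k - 1)).choose (k - 1) : ℂ) * (-(q ^ (d * l) * (r : ℂ))) ^ m))
        (s := Finset.range (n + 1)) (fun l _ => hl l)
      have hfun : (fun m : ℕ => ∑ l ∈ Finset.range (n + 1),
            (c * ((n.choose l : ℂ) * (-1) ^ l * q ^ (l * z) / (1 - q) ^ n)) *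
              (((m + (k - 1)).choose (k - 1) : ℂ) * (-(q ^ (d * l) * (r : ℂ))) ^ m))
          = (fun m : ℕ => c * ((m + k - 1).choose m : ℂ) * (-1 : ℂ) ^ m *
              ((1 - q ^ (z + d * m)) / (1 - q)) ^ n * (r : ℂ) ^ m) := by
        funext m
        have hch : ((m + k - 1).choose m : ℂ) = ((m + (k - 1)).choose (k - 1) : ℂ) := by
          rw [show m + k - 1 = m + (k - 1) by omega]
          exact_mod_cast congrArg Nat.cast (Nat.choose_symm_add (a := m) (b := k - 1))
        have hexp : (1 - q ^ (z + d * m)) ^ n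
            = ∑ l ∈ Finset.range (n + 1), (-q ^ (z + d * m)) ^ l * (n.choose l : ℂ) := by
          rw [sub_eq_add_neg, add_comm, add_pow]
          exact Finset.sum_congr rfl fun l _ => by rw [one_pow, mul_one]
        rw [div_pow, hexp, Finset.sum_div, Finset.mul_sum, Finset.sum_mul]
        refine Finset.sum_congr rfl fun l _ => ?_
        have e1 : ((q : ℂ) ^ (z + d * m)) ^ l = q ^ (l * z) * (q ^ (d * l)) ^ m := by
          rw [← pow_mul, ← pow_mul, ← pow_add]
          congr 1
          ring
        rw [hch, neg_pow (q ^ (z + d * m)), e1, neg_pow (q ^ (d * l) * (r : ℂ)), mul_pow]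
        ring
      rw [hfun] at hsum
      have hval : (∑ l ∈ Finset.range (n + 1),
            (c * ((n.choose l : ℂ) * (-1) ^ l * q ^ (l * z) / (1 - q) ^ n)) *
              (1 / (1 - (-(q ^ (d * l) * (r : ℂ)))) ^ ((k - 1) + 1)))
          = (1 / (1 - q) ^ n) * (c * ∑ l ∈ Finset.range (n + 1),
              (n.choose l : ℂ) * (-1 : ℂ) ^ l * q ^ (l * z) /
                (1 + q ^ (d * l) * (r : ℂ)) ^ k) := by
        rw [Finset.mul_sum, Finset.mul_sum]
        refine Finset.sum_congr rfl fun l _ => ?_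
        rw [sub_neg_eq_add, show (k - 1) + 1 = k by omega]
        ring
      rw [hval] at hsum
      exact hsum
    have htot := (hasSum_sum (s := (Finset.univ : Finset (Fin k → Fin d)))
      (fun a _ => ha a)).mul_left ((2 : ℂ) ^ k)
    have hfun2 : (fun m : ℕ =>
        (2 ^ k * ∑ a : Fin k → Fin d,
          (∏ i, χ (a i)) * (-1 : ℂ) ^ (∑ j, (a j : ℕ)) *
            ((m + k - 1).choose m : ℂ) * (-1 : ℂ) ^ m *
              ((1 - q ^ (x + (∑ j, (a j : ℕ)) + d * m)) / (1 - q)) ^ n) * (r : ℂ) ^ m)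
        = (fun m : ℕ => 2 ^ k * ∑ a : Fin k → Fin d,
          (∏ i, χ (a i)) * (-1 : ℂ) ^ (∑ j, (a j : ℕ)) *
            ((m + k - 1).choose m : ℂ) * (-1 : ℂ) ^ m *
              ((1 - q ^ (x + (∑ j, (a j : ℕ)) + d * m)) / (1 - q)) ^ n * (r : ℂ) ^ m) := by
      funext m
      rw [mul_assoc, Finset.sum_mul]
    rw [hfun2]
    convert htot using 1
    case e'_3 => rfl
    rw [Finset.mul_sum, Finset.mul_sum]
    exact Finset.sum_congr rfl fun a _ => by ring
  have hco : Tendsto (fun r : ℝ => (r : ℂ)) (nhdsWithin 1 (Set.Iio 1)) (nhds 1) := by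
    have h := (Complex.continuous_ofReal.tendsto (1 : ℝ)).mono_left
      (nhdsWithin_le_nhds (s := Set.Iio 1))
    simpa using h
  have hT : Tendsto (fun r : ℝ =>
      (2 ^ k / (1 - q) ^ n) * ∑ a : Fin k → Fin d,
        (∏ i, χ (a i)) * (-1 : ℂ) ^ (∑ j, (a j : ℕ)) *
          ∑ l ∈ Finset.range (n + 1),
            (n.choose l : ℂ) * (-1 : ℂ) ^ l * q ^ (l * (x + ∑ j, (a j : ℕ))) /
              (1 + q ^ (d * l) * (r : ℂ)) ^ k)
      (nhdsWithin 1 (Set.Iio 1))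
      (nhds ((2 ^ k / (1 - q) ^ n) * ∑ a : Fin k → Fin d,
        (∏ i, χ (a i)) * (-1 : ℂ) ^ (∑ j, (a j : ℕ)) *
          ∑ l ∈ Finset.range (n + 1),
            (n.choose l : ℂ) * (-1 : ℂ) ^ l * q ^ (l * (x + ∑ j, (a j : ℕ))) /
              (1 + q ^ (d * l)) ^ k)) := by
    refine Tendsto.const_mul _ (tendsto_finset_sum _ fun a _ =>
      Tendsto.const_mul _ (tendsto_finset_sum _ fun l _ => ?_))
    have hden : Tendsto (fun r : ℝ => (1 + q ^ (d * l) * (r : ℂ)) ^ k)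
        (nhdsWithin 1 (Set.Iio 1)) (nhds ((1 + q ^ (d * l)) ^ k)) := by
      have h1 : Tendsto (fun r : ℝ => (1 : ℂ) + q ^ (d * l) * (r : ℂ))
          (nhdsWithin 1 (Set.Iio 1)) (nhds (1 + q ^ (d * l) * 1)) :=
        tendsto_const_nhds.add (tendsto_const_nhds.mul hco)
      rw [mul_one] at h1
      exact h1.pow k
    exact tendsto_const_nhds.div hden (pow_ne_zero k (hne l))
  have hev : (fun r : ℝ =>
      (2 ^ k / (1 - q) ^ n) * ∑ a : Fin k → Fin d,
        (∏ i, χ (a i)) * (-1 : ℂ) ^ (∑ j, (a j : ℕ)) *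
          ∑ l ∈ Finset.range (n + 1),
            (n.choose l : ℂ) * (-1 : ℂ) ^ l * q ^ (l * (x + ∑ j, (a j : ℕ))) /
              (1 + q ^ (d * l) * (r : ℂ)) ^ k)
      =ᶠ[nhdsWithin 1 (Set.Iio 1)]
      (fun r : ℝ => ∑' m : ℕ,
        (2 ^ k * ∑ a : Fin k → Fin d,
          (∏ i, χ (a i)) * (-1 : ℂ) ^ (∑ j, (a j : ℕ)) *
            ((m + k - 1).choose m : ℂ) * (-1 : ℂ) ^ m *
              ((1 - q ^ (x + (∑ j, (a j : ℕ)) + d * m)) / (1 - q)) ^ n) * (r : ℂ) ^ m) := by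
    filter_upwards [Ioo_mem_nhdsLT_of_mem (show (1:ℝ) ∈ Set.Ioc (0:ℝ) 1 by norm_num)]
      with r hr
    exact ((key r hr).tsum_eq).symm
  exact Tendsto.congr' hev hT
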